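/- There exist a symmetric positive definite n×n matrix P, a real scalar ξ, and a q×p matrix K such that the block matrix [[(A+BKC)ᵀP + P(A+BKC) + εP, P + ξI],[P + ξI, 0]] is negative semidefinite, if and only if there exists a q×p matrix K such that (A+BKC) + (A+BKC)ᵀ + εI is negative semidefinite. -/

import Mathlib

open Matrix

theorem sof_bmi_iff_lmi (n q p : ℕ)
    (A : Matrix (Fin n) (Fin n) ℝ) (B : Matrix (Fin n) (Fin q) ℝ)
    (C : Matrix (Fin p) (Fin n) ℝ) (ε : ℝ) (hε : 0 < ε) :
    (∃ (P : Matrix (Fin n) (Fin n) ℝ) (ξ : ℝ) (K : Matrix (Fin q) (Fin p) ℝ),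
      P.PosDef ∧
      ∀ v : (Fin n ⊕ Fin n) → ℝ,
        v ⬝ᵥ (Matrix.fromBlocks
          ((A + B * K * C)ᵀ * P + P * (A + B * K * C) + ε • P)
          (P + ξ • (1 : Matrix (Fin n) (Fin n) ℝ))
          (P + ξ • (1 : Matrix (Fin n) (Fin n) ℝ)) 0).mulVec v ≤ 0)
    ↔ (∃ K : Matrix (Fin q) (Fin p) ℝ,
        ∀ v : Fin n → ℝ,
          v ⬝ᵥ ((A + B * K * C) + (A + B * K * C)ᵀ
            + ε • (1 : Matrix (Fin n) (Fin n) ℝ)).mulVec v ≤ 0) := by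
  constructor
  · rintro ⟨P, ξ, K, hP, h⟩
    rcases Nat.eq_zero_or_pos n with hn | hn
    · subst hn
      exact ⟨K, fun v => by simp [dotProduct]⟩
    set S := A + B * K * C with hS
    set TL := Sᵀ * P + P * S + ε • P with hTL
    set N := P + ξ • (1 : Matrix (Fin n) (Fin n) ℝ) with hN
    have hPsym : Pᵀ = P := hP.1
    have hNsym : Nᵀ = N := by
      simp [hN, transpose_add, transpose_smul, hPsym]
    have hQ : ∀ x y : Fin n → ℝ,
        (Sum.elim x y) ⬝ᵥ (Matrix.fromBlocks TL N N 0).mulVec (Sum.elim x y)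
          = x ⬝ᵥ TL.mulVec x + x ⬝ᵥ N.mulVec y + y ⬝ᵥ N.mulVec x := by
      intro x y
      rw [fromBlocks_mulVec, sumElim_dotProduct_sumElim]
      simp [dotProduct_add, zero_mulVec]
    have hsymm : ∀ x y : Fin n → ℝ, y ⬝ᵥ N.mulVec x = x ⬝ᵥ N.mulVec y := by
      intro x y
      rw [dotProduct_mulVec y, ← mulVec_transpose, hNsym, dotProduct_comm]
    -- off-diagonal block is zero
    have hNzero : ∀ x y : Fin n → ℝ, x ⬝ᵥ N.mulVec y = 0 := by
      intro x y
      by_contra hc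
      set c := x ⬝ᵥ N.mulVec y with hcdef
      set a := x ⬝ᵥ TL.mulVec x with hadef
      have key : ∀ t : ℝ, a + t * c + t * c ≤ 0 := by
        intro t
        have := h (Sum.elim x (t • y))
        rw [hQ x (t • y)] at this
        rw [hsymm x (t • y)] at this
        simpa [mulVec_smul, dotProduct_smul, smul_eq_mul] using this
      have h2c : (2 : ℝ) * c ≠ 0 := mul_ne_zero two_ne_zero hc
      have ht : (-a + 1) / (2 * c) * c + (-a + 1) / (2 * c) * c = -a + 1 := by
        field_simp; ring
      have := key ((-a + 1) / (2 * c))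
      linarith
    have hN0 : P + ξ • (1 : Matrix (Fin n) (Fin n) ℝ) = 0 := by
      rw [← hN]
      ext i j
      have := hNzero (Pi.single i 1) (Pi.single j 1)
      simpa [dotProduct, mulVec, Pi.single_apply, Finset.sum_ite_eq,
        Finset.sum_ite_eq'] using this
    have hPeq : P = (-ξ) • (1 : Matrix (Fin n) (Fin n) ℝ) := by
      rw [neg_smul]; exact eq_neg_of_add_eq_zero_left hN0
    -- -ξ > 0
    have hξ : 0 < -ξ := by
      have e : Fin n → ℝ := Pi.single ⟨0, hn⟩ 1
      have hpd := hP.dotProduct_mulVec_pos (x := Pi.single ⟨0, hn⟩ (1 : ℝ)) (by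
        intro h0
        have := congrFun h0 ⟨0, hn⟩
        simp [Pi.single_apply] at this)
      rw [hPeq] at hpd
      simpa [mulVec, dotProduct, Pi.single_apply, Finset.sum_ite_eq,
        Finset.sum_ite_eq'] using hpd
    have hTLeq : TL = (-ξ) • (S + Sᵀ + ε • (1 : Matrix (Fin n) (Fin n) ℝ)) := by
      rw [hTL, hPeq]
      rw [Matrix.mul_smul, Matrix.smul_mul, mul_one, one_mul, smul_smul,
        smul_add, smul_add, smul_smul, mul_comm ε (-ξ), ← smul_smul]
      module
    refine ⟨K, fun x => ?_⟩
    have hx := h (Sum.elim x 0)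
    rw [hQ x 0] at hx
    simp only [mulVec_zero, dotProduct_zero, zero_dotProduct, add_zero] at hx
    rw [hTLeq] at hx
    rw [smul_mulVec, dotProduct_smul, smul_eq_mul] at hx
    nlinarith
  · rintro ⟨K, h⟩
    refine ⟨1, -1, K, Matrix.PosDef.one, fun v => ?_⟩
    have hv : Sum.elim (v ∘ Sum.inl) (v ∘ Sum.inr) = v := Sum.elim_comp_inl_inr v
    rw [← hv, fromBlocks_mulVec, sumElim_dotProduct_sumElim]
    have h1 : (1 : Matrix (Fin n) (Fin n) ℝ) + (-1 : ℝ) • 1 = 0 := by simp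
    rw [h1]
    have h2 : (A + B * K * C)ᵀ * 1 + 1 * (A + B * K * C) + ε • (1 : Matrix (Fin n) (Fin n) ℝ)
        = (A + B * K * C) + (A + B * K * C)ᵀ + ε • 1 := by
      rw [mul_one, one_mul, add_comm (A + B * K * C)ᵀ]
    rw [h2]
    simpa [zero_mulVec] using h (v ∘ Sum.inl)
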